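/- Let (X, μ_X), (Y, μ_Y), (Z, μ_Z) be probability spaces and let f : X×Y → [−1,1], g : Y×Z → [−1,1], h : Z×X → [−1,1] be measurable. Then |Λ₃(f, g, h)| ≤ min( ‖f‖_{□²}, ‖g‖_{□²}, ‖h‖_{□²} ). -/

import Mathlib

open MeasureTheory

lemma abs_mul_le_one' {a b : ℝ} (ha : |a| ≤ 1) (hb : |b| ≤ 1) : |a * b| ≤ 1 := by
  rw [abs_mul]
  nlinarith [abs_nonneg a, abs_nonneg b]

section helpers
variable {α : Type*} [MeasurableSpace α] {μ : Measure α}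

lemma integrable_of_abs_le_one [IsFiniteMeasure μ] {u : α → ℝ}
    (hm : AEStronglyMeasurable u μ) (hb : ∀ a, |u a| ≤ 1) : Integrable u μ :=
  Integrable.mono' (integrable_const 1) hm
    (ae_of_all _ fun a => by simpa [Real.norm_eq_abs] using hb a)

lemma abs_integral_le_one [IsProbabilityMeasure μ] {u : α → ℝ}
    (hb : ∀ a, |u a| ≤ 1) : |∫ a, u a ∂μ| ≤ 1 := by
  calc |∫ a, u a ∂μ| = ‖∫ a, u a ∂μ‖ := (Real.norm_eq_abs _).symm
    _ ≤ 1 * (μ Set.univ).toReal :=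
        norm_integral_le_of_norm_le_const
          (ae_of_all _ fun a => by simpa [Real.norm_eq_abs] using hb a)
    _ = 1 := by simp

lemma integral_sq_le_one [IsProbabilityMeasure μ] {u : α → ℝ}
    (hm : AEStronglyMeasurable u μ) (hb : ∀ a, |u a| ≤ 1) :
    ∫ a, u a ^ 2 ∂μ ≤ 1 := by
  have hint : Integrable (fun a => u a ^ 2) μ :=
    integrable_of_abs_le_one ((hm.mul hm).congr (ae_of_all _ fun a => (sq (u a)).symm))
      (fun a => by rw [abs_pow]; exact pow_le_one₀ (abs_nonneg _) (hb a))
  calc ∫ a, u a ^ 2 ∂μ ≤ ∫ _a, (1 : ℝ) ∂μ :=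
        integral_mono hint (integrable_const 1)
          (fun a => (sq_le_one_iff_abs_le_one _).2 (hb a))
    _ = 1 := by simp

lemma cauchy_schwarz_bdd [IsFiniteMeasure μ] {u v : α → ℝ}
    (hu : AEStronglyMeasurable u μ) (hv : AEStronglyMeasurable v μ)
    (hub : ∀ a, |u a| ≤ 1) (hvb : ∀ a, |v a| ≤ 1) :
    |∫ a, u a * v a ∂μ| ≤ Real.sqrt (∫ a, u a ^ 2 ∂μ) * Real.sqrt (∫ a, v a ^ 2 ∂μ) := by
  have h2 : ENNReal.ofReal (2:ℝ) = 2 := by norm_num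
  have hu2 : MemLp u (ENNReal.ofReal 2) μ := by
    rw [h2]
    exact (memLp_top_of_bound hu 1
      (ae_of_all _ fun a => by simpa [Real.norm_eq_abs] using hub a)).mono_exponent le_top
  have hv2 : MemLp v (ENNReal.ofReal 2) μ := by
    rw [h2]
    exact (memLp_top_of_bound hv 1
      (ae_of_all _ fun a => by simpa [Real.norm_eq_abs] using hvb a)).mono_exponent le_top
  have hpq : Real.HolderConjugate 2 2 := (Real.holderConjugate_iff_eq_conjExponent one_lt_two).2 (by norm_num)
  have key := integral_mul_norm_le_Lp_mul_Lq hpq hu2 hv2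
  have e : ∀ w : ℝ, ‖w‖ ^ (2:ℝ) = w ^ 2 := fun w => by
    rw [show (2:ℝ) = ((2:ℕ):ℝ) by norm_num, Real.rpow_natCast, Real.norm_eq_abs, sq_abs]
  simp only [e] at key
  calc |∫ a, u a * v a ∂μ| ≤ ∫ a, |u a * v a| ∂μ := by
        simpa [Real.norm_eq_abs, abs_mul] using
          norm_integral_le_integral_norm (μ := μ) (fun a => u a * v a)
    _ = ∫ a, ‖u a‖ * ‖v a‖ ∂μ := by simp [Real.norm_eq_abs, abs_mul]
    _ ≤ (∫ a, u a ^ 2 ∂μ) ^ ((1:ℝ)/2) * (∫ a, v a ^ 2 ∂μ) ^ ((1:ℝ)/2) := by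
        simpa using key
    _ = Real.sqrt (∫ a, u a ^ 2 ∂μ) * Real.sqrt (∫ a, v a ^ 2 ∂μ) := by
        rw [Real.sqrt_eq_rpow, Real.sqrt_eq_rpow]

end helpers

/-- The Gowers box norm `‖f‖_{□²}` of `f : X × Y → ℝ`, the nonnegative fourth
root of `∫∫∫∫ f(x,y) f(x,y') f(x',y) f(x',y')`. -/
noncomputable def boxNorm {X Y : Type*} [MeasurableSpace X] [MeasurableSpace Y]
    (μX : Measure X) (μY : Measure Y) (f : X × Y → ℝ) : ℝ :=
  (∫ x, ∫ x', ∫ y, ∫ y',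
      f (x, y) * f (x, y') * f (x', y) * f (x', y') ∂μY ∂μY ∂μX ∂μX) ^ ((1 : ℝ) / 4)


lemma key_vn {X Y Z : Type*}
    [MeasurableSpace X] [MeasurableSpace Y] [MeasurableSpace Z]
    (μX : Measure X) (μY : Measure Y) (μZ : Measure Z)
    [IsProbabilityMeasure μX] [IsProbabilityMeasure μY] [IsProbabilityMeasure μZ]
    (f : X × Y → ℝ) (g : Y × Z → ℝ) (h : Z × X → ℝ)
    (hf : Measurable f) (hg : Measurable g) (hh : Measurable h)
    (hf1 : ∀ p, |f p| ≤ 1) (hg1 : ∀ p, |g p| ≤ 1) (hh1 : ∀ p, |h p| ≤ 1) :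
    |∫ x, ∫ y, ∫ z, f (x, y) * g (y, z) * h (z, x) ∂μZ ∂μY ∂μX| ≤ boxNorm μX μY f := by
  -- the three auxiliary kernels
  set F : X × Z → ℝ := fun p => ∫ y, f (p.1, y) * g (y, p.2) ∂μY with hFdef
  set K : Y × Y → ℝ := fun q => ∫ x, f (x, q.1) * f (x, q.2) ∂μX with hKdef
  set L : Y × Y → ℝ := fun q => ∫ z, g (q.1, z) * g (q.2, z) ∂μZ with hLdef
  -- measurability of the kernels
  have hFm : StronglyMeasurable F := by
    have : Measurable fun q : (X × Z) × Y => f (q.1.1, q.2) * g (q.2, q.1.2) := by fun_prop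
    exact this.stronglyMeasurable.integral_prod_right'
  have hKm : StronglyMeasurable K := by
    have : Measurable fun q : (Y × Y) × X => f (q.2, q.1.1) * f (q.2, q.1.2) := by fun_prop
    exact this.stronglyMeasurable.integral_prod_right'
  have hLm : StronglyMeasurable L := by
    have : Measurable fun q : (Y × Y) × Z => g (q.1.1, q.2) * g (q.1.2, q.2) := by fun_prop
    exact this.stronglyMeasurable.integral_prod_right'
  -- boundedness of the kernels
  have hFb : ∀ p, |F p| ≤ 1 := fun p =>
    abs_integral_le_one fun y => abs_mul_le_one' (hf1 _) (hg1 _)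
  have hKb : ∀ q, |K q| ≤ 1 := fun q =>
    abs_integral_le_one fun x => abs_mul_le_one' (hf1 _) (hf1 _)
  have hLb : ∀ q, |L q| ≤ 1 := fun q =>
    abs_integral_le_one fun z => abs_mul_le_one' (hg1 _) (hg1 _)
  -- Step A : Λ = ∫ F·h over the product
  have stepA : (∫ x, ∫ y, ∫ z, f (x, y) * g (y, z) * h (z, x) ∂μZ ∂μY ∂μX)
      = ∫ p : X × Z, F p * h (p.2, p.1) ∂(μX.prod μZ) := by
    have hintx : ∀ x, Integrable
        (Function.uncurry fun y z => f (x, y) * g (y, z) * h (z, x)) (μY.prod μZ) := by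
      intro x
      refine integrable_of_abs_le_one ?_ fun p => abs_mul_le_one' (abs_mul_le_one' (hf1 _) (hg1 _)) (hh1 _)
      have : Measurable fun p : Y × Z => f (x, p.1) * g p * h (p.2, x) := by fun_prop
      exact this.aestronglyMeasurable
    have hintFh : Integrable (fun p : X × Z => F p * h (p.2, p.1)) (μX.prod μZ) := by
      refine integrable_of_abs_le_one ?_ fun p => abs_mul_le_one' (hFb p) (hh1 _)
      exact (hFm.aestronglyMeasurable.mul
        (hh.comp (measurable_snd.prodMk measurable_fst)).aestronglyMeasurable)
    rw [integral_prod _ hintFh]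
    refine integral_congr_ae (ae_of_all _ fun x => ?_)
    dsimp only
    rw [integral_integral_swap (hintx x)]
    refine integral_congr_ae (ae_of_all _ fun z => ?_)
    simp only [hFdef]
    exact integral_mul_const _ _
  -- Step B : ∫ F² = ∫ K·L
  have stepB : (∫ p, F p ^ 2 ∂(μX.prod μZ)) = ∫ q, K q * L q ∂(μY.prod μY) := by
    have e1 : ∀ p : X × Z, F p ^ 2
        = ∫ q : Y × Y, (f (p.1, q.1) * g (q.1, p.2)) * (f (p.1, q.2) * g (q.2, p.2))
            ∂(μY.prod μY) := by
      intro p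
      simp only [hFdef, sq]
      exact (integral_prod_mul _ _).symm
    have hintB : Integrable
        (Function.uncurry fun (p : X × Z) (q : Y × Y) =>
          (f (p.1, q.1) * g (q.1, p.2)) * (f (p.1, q.2) * g (q.2, p.2)))
        ((μX.prod μZ).prod (μY.prod μY)) := by
      refine integrable_of_abs_le_one ?_
        fun r => abs_mul_le_one' (abs_mul_le_one' (hf1 _) (hg1 _)) (abs_mul_le_one' (hf1 _) (hg1 _))
      have : Measurable fun r : (X × Z) × (Y × Y) =>
          (f (r.1.1, r.2.1) * g (r.2.1, r.1.2)) * (f (r.1.1, r.2.2) * g (r.2.2, r.1.2)) := by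
        fun_prop
      exact this.aestronglyMeasurable
    calc (∫ p, F p ^ 2 ∂(μX.prod μZ))
        = ∫ p : X × Z, ∫ q : Y × Y,
            (f (p.1, q.1) * g (q.1, p.2)) * (f (p.1, q.2) * g (q.2, p.2))
              ∂(μY.prod μY) ∂(μX.prod μZ) := integral_congr_ae (ae_of_all _ e1)
      _ = ∫ q : Y × Y, ∫ p : X × Z,
            (f (p.1, q.1) * g (q.1, p.2)) * (f (p.1, q.2) * g (q.2, p.2))
              ∂(μX.prod μZ) ∂(μY.prod μY) := integral_integral_swap hintB
      _ = ∫ q, K q * L q ∂(μY.prod μY) := by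
          refine integral_congr_ae (ae_of_all _ fun q => ?_)
          simp only [hKdef, hLdef]
          calc ∫ p : X × Z, (f (p.1, q.1) * g (q.1, p.2)) * (f (p.1, q.2) * g (q.2, p.2))
                  ∂(μX.prod μZ)
              = ∫ p : X × Z, (f (p.1, q.1) * f (p.1, q.2)) * (g (q.1, p.2) * g (q.2, p.2))
                  ∂(μX.prod μZ) :=
                integral_congr_ae (ae_of_all _ fun p => mul_mul_mul_comm _ _ _ _)
            _ = (∫ x, f (x, q.1) * f (x, q.2) ∂μX) * (∫ z, g (q.1, z) * g (q.2, z) ∂μZ) :=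
                integral_prod_mul (fun x => f (x, q.1) * f (x, q.2))
                  (fun z => g (q.1, z) * g (q.2, z))
  -- Step C : ∫ K² = box norm base
  have stepC : (∫ q, K q ^ 2 ∂(μY.prod μY))
      = ∫ x, ∫ x', ∫ y, ∫ y',
          f (x, y) * f (x, y') * f (x', y) * f (x', y') ∂μY ∂μY ∂μX ∂μX := by
    have e2 : ∀ q : Y × Y, K q ^ 2
        = ∫ r : X × X, (f (r.1, q.1) * f (r.1, q.2)) * (f (r.2, q.1) * f (r.2, q.2))
            ∂(μX.prod μX) := by
      intro q
      simp only [hKdef, sq]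
      exact (integral_prod_mul _ _).symm
    have hintC : Integrable
        (Function.uncurry fun (q : Y × Y) (r : X × X) =>
          (f (r.1, q.1) * f (r.1, q.2)) * (f (r.2, q.1) * f (r.2, q.2)))
        ((μY.prod μY).prod (μX.prod μX)) := by
      refine integrable_of_abs_le_one ?_
        fun r => abs_mul_le_one' (abs_mul_le_one' (hf1 _) (hf1 _)) (abs_mul_le_one' (hf1 _) (hf1 _))
      have : Measurable fun w : (Y × Y) × (X × X) =>
          (f (w.2.1, w.1.1) * f (w.2.1, w.1.2)) * (f (w.2.2, w.1.1) * f (w.2.2, w.1.2)) := by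
        fun_prop
      exact this.aestronglyMeasurable
    have hintG : Integrable
        (fun r : X × X => ∫ q : Y × Y,
          (f (r.1, q.1) * f (r.1, q.2)) * (f (r.2, q.1) * f (r.2, q.2)) ∂(μY.prod μY))
        (μX.prod μX) := by
      refine integrable_of_abs_le_one ?_
        (fun r => abs_integral_le_one fun q =>
          abs_mul_le_one' (abs_mul_le_one' (hf1 _) (hf1 _)) (abs_mul_le_one' (hf1 _) (hf1 _)))
      have : Measurable fun w : (X × X) × (Y × Y) =>
          (f (w.1.1, w.2.1) * f (w.1.1, w.2.2)) * (f (w.1.2, w.2.1) * f (w.1.2, w.2.2)) := by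
        fun_prop
      exact this.stronglyMeasurable.integral_prod_right'.aestronglyMeasurable
    have hintPsi : ∀ x x' : X, Integrable
        (fun q : Y × Y => (f (x, q.1) * f (x, q.2)) * (f (x', q.1) * f (x', q.2)))
        (μY.prod μY) := by
      intro x x'
      refine integrable_of_abs_le_one ?_
        fun q => abs_mul_le_one' (abs_mul_le_one' (hf1 _) (hf1 _)) (abs_mul_le_one' (hf1 _) (hf1 _))
      have : Measurable fun q : Y × Y =>
          (f (x, q.1) * f (x, q.2)) * (f (x', q.1) * f (x', q.2)) := by fun_prop
      exact this.aestronglyMeasurable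
    calc (∫ q, K q ^ 2 ∂(μY.prod μY))
        = ∫ q : Y × Y, ∫ r : X × X,
            (f (r.1, q.1) * f (r.1, q.2)) * (f (r.2, q.1) * f (r.2, q.2))
              ∂(μX.prod μX) ∂(μY.prod μY) := integral_congr_ae (ae_of_all _ e2)
      _ = ∫ r : X × X, ∫ q : Y × Y,
            (f (r.1, q.1) * f (r.1, q.2)) * (f (r.2, q.1) * f (r.2, q.2))
              ∂(μY.prod μY) ∂(μX.prod μX) := integral_integral_swap hintC
      _ = ∫ x, ∫ x', ∫ q : Y × Y,
            (f (x, q.1) * f (x, q.2)) * (f (x', q.1) * f (x', q.2))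
              ∂(μY.prod μY) ∂μX ∂μX := integral_prod _ hintG
      _ = ∫ x, ∫ x', ∫ y, ∫ y',
            f (x, y) * f (x, y') * f (x', y) * f (x', y') ∂μY ∂μY ∂μX ∂μX := by
          refine integral_congr_ae (ae_of_all _ fun x => ?_)
          refine integral_congr_ae (ae_of_all _ fun x' => ?_)
          dsimp only
          rw [integral_prod _ (hintPsi x x')]
          refine integral_congr_ae (ae_of_all _ fun y => ?_)
          refine integral_congr_ae (ae_of_all _ fun y' => ?_)
          exact (mul_assoc _ _ _).symm
  -- assemble
  have hB0 : (0:ℝ) ≤ ∫ q, K q ^ 2 ∂(μY.prod μY) := integral_nonneg fun q => sq_nonneg _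
  have cs1 : |∫ p : X × Z, F p * h (p.2, p.1) ∂(μX.prod μZ)|
      ≤ Real.sqrt (∫ p, F p ^ 2 ∂(μX.prod μZ)) * 1 := by
    have hhm : AEStronglyMeasurable (fun p : X × Z => h (p.2, p.1)) (μX.prod μZ) :=
      (hh.comp (measurable_snd.prodMk measurable_fst)).aestronglyMeasurable
    refine le_trans (cauchy_schwarz_bdd hFm.aestronglyMeasurable hhm hFb (fun p => hh1 _)) ?_
    refine mul_le_mul_of_nonneg_left ?_ (Real.sqrt_nonneg _)
    rw [show (1:ℝ) = Real.sqrt 1 by simp]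
    exact Real.sqrt_le_sqrt (integral_sq_le_one hhm fun p => hh1 _)
  have cs2 : (∫ p, F p ^ 2 ∂(μX.prod μZ)) ≤ Real.sqrt (∫ q, K q ^ 2 ∂(μY.prod μY)) := by
    rw [stepB]
    refine le_trans (le_abs_self _) ?_
    refine le_trans (cauchy_schwarz_bdd hKm.aestronglyMeasurable hLm.aestronglyMeasurable hKb hLb) ?_
    calc Real.sqrt (∫ q, K q ^ 2 ∂(μY.prod μY)) * Real.sqrt (∫ q, L q ^ 2 ∂(μY.prod μY))
        ≤ Real.sqrt (∫ q, K q ^ 2 ∂(μY.prod μY)) * 1 := by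
          refine mul_le_mul_of_nonneg_left ?_ (Real.sqrt_nonneg _)
          rw [show (1:ℝ) = Real.sqrt 1 by simp]
          exact Real.sqrt_le_sqrt (integral_sq_le_one hLm.aestronglyMeasurable hLb)
      _ = Real.sqrt (∫ q, K q ^ 2 ∂(μY.prod μY)) := mul_one _
  rw [stepA, boxNorm, ← stepC]
  rw [mul_one] at cs1
  calc |∫ p : X × Z, F p * h (p.2, p.1) ∂(μX.prod μZ)|
      ≤ Real.sqrt (∫ p, F p ^ 2 ∂(μX.prod μZ)) := cs1
    _ ≤ Real.sqrt (Real.sqrt (∫ q, K q ^ 2 ∂(μY.prod μY))) := Real.sqrt_le_sqrt cs2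
    _ = (∫ q, K q ^ 2 ∂(μY.prod μY)) ^ ((1:ℝ)/4) := by
        rw [Real.sqrt_eq_rpow, Real.sqrt_eq_rpow, ← Real.rpow_mul hB0]
        norm_num

lemma rotate_vn {X Y Z : Type*}
    [MeasurableSpace X] [MeasurableSpace Y] [MeasurableSpace Z]
    (μX : Measure X) (μY : Measure Y) (μZ : Measure Z)
    [IsProbabilityMeasure μX] [IsProbabilityMeasure μY] [IsProbabilityMeasure μZ]
    (f : X × Y → ℝ) (g : Y × Z → ℝ) (h : Z × X → ℝ)
    (hf : Measurable f) (hg : Measurable g) (hh : Measurable h)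
    (hf1 : ∀ p, |f p| ≤ 1) (hg1 : ∀ p, |g p| ≤ 1) (hh1 : ∀ p, |h p| ≤ 1) :
    ∫ x, ∫ y, ∫ z, f (x, y) * g (y, z) * h (z, x) ∂μZ ∂μY ∂μX
      = ∫ y, ∫ z, ∫ x, g (y, z) * h (z, x) * f (x, y) ∂μX ∂μZ ∂μY := by
  have hint1 : Integrable
      (Function.uncurry fun (x : X) (y : Y) => ∫ z, f (x, y) * g (y, z) * h (z, x) ∂μZ)
      (μX.prod μY) := by
    refine integrable_of_abs_le_one ?_ (fun p => abs_integral_le_one fun z =>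
      abs_mul_le_one' (abs_mul_le_one' (hf1 _) (hg1 _)) (hh1 _))
    have : Measurable fun w : (X × Y) × Z => f w.1 * g (w.1.2, w.2) * h (w.2, w.1.1) := by
      fun_prop
    exact this.stronglyMeasurable.integral_prod_right'.aestronglyMeasurable
  rw [integral_integral_swap hint1]
  refine integral_congr_ae (ae_of_all _ fun y => ?_)
  dsimp only
  have hint2 : Integrable
      (Function.uncurry fun (x : X) (z : Z) => f (x, y) * g (y, z) * h (z, x))
      (μX.prod μZ) := by
    refine integrable_of_abs_le_one ?_ (fun p =>
      abs_mul_le_one' (abs_mul_le_one' (hf1 _) (hg1 _)) (hh1 _))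
    have : Measurable fun p : X × Z => f (p.1, y) * g (y, p.2) * h (p.2, p.1) := by fun_prop
    exact this.aestronglyMeasurable
  rw [integral_integral_swap hint2]
  refine integral_congr_ae (ae_of_all _ fun z => ?_)
  dsimp only
  refine integral_congr_ae (ae_of_all _ fun x => ?_)
  ring

/-- **Generalised von Neumann inequality**: `|Λ₃(f, g, h)|` is bounded by the
minimum of the box norms of `f`, `g`, `h`. -/
theorem generalised_von_neumann {X Y Z : Type*}
    [MeasurableSpace X] [MeasurableSpace Y] [MeasurableSpace Z]
    (μX : Measure X) (μY : Measure Y) (μZ : Measure Z)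
    [IsProbabilityMeasure μX] [IsProbabilityMeasure μY] [IsProbabilityMeasure μZ]
    (f : X × Y → ℝ) (g : Y × Z → ℝ) (h : Z × X → ℝ)
    (hf : Measurable f) (hg : Measurable g) (hh : Measurable h)
    (hf1 : ∀ p, f p ∈ Set.Icc (-1 : ℝ) 1) (hg1 : ∀ p, g p ∈ Set.Icc (-1 : ℝ) 1)
    (hh1 : ∀ p, h p ∈ Set.Icc (-1 : ℝ) 1) :
    |∫ x, ∫ y, ∫ z, f (x, y) * g (y, z) * h (z, x) ∂μZ ∂μY ∂μX|
      ≤ min (boxNorm μX μY f) (min (boxNorm μY μZ g) (boxNorm μZ μX h)) := by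
  have hf1' : ∀ p, |f p| ≤ 1 := fun p => abs_le.2 ⟨(hf1 p).1, (hf1 p).2⟩
  have hg1' : ∀ p, |g p| ≤ 1 := fun p => abs_le.2 ⟨(hg1 p).1, (hg1 p).2⟩
  have hh1' : ∀ p, |h p| ≤ 1 := fun p => abs_le.2 ⟨(hh1 p).1, (hh1 p).2⟩
  refine le_min ?_ (le_min ?_ ?_)
  · exact key_vn μX μY μZ f g h hf hg hh hf1' hg1' hh1'
  · rw [rotate_vn μX μY μZ f g h hf hg hh hf1' hg1' hh1']
    exact key_vn μY μZ μX g h f hg hh hf hg1' hh1' hf1'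
  · rw [rotate_vn μX μY μZ f g h hf hg hh hf1' hg1' hh1',
      rotate_vn μY μZ μX g h f hg hh hf hg1' hh1' hf1']
    exact key_vn μZ μX μY h f g hh hf hg hh1' hf1' hg1'
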